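/- Let α > 0 and f > 0. If (a_n)_{n≥0} is a sequence of strictly positive real numbers with a_0 = f, Σ_{n≥1} a_n² < ∞, and c_{n−1} a_{n−1}² = c_n a_n a_{n+1} for all n ≥ 1, then a_n = f·2^{−αn/3} for every n ≥ 0. In other words, the forced inviscid DN model has a unique positive constant (stationary) solution of finite energy. -/

import Mathlib

open Set

namespace Stmt3

lemma no_mono_growth (a : ℕ → ℝ) (hpos : ∀ n, 0 < a n)
    (hsum : Summable fun n => (a (n + 1)) ^ 2) (n0 : ℕ)
    (hmono : ∀ k : ℕ, a (n0 + 2 * k) ≤ a (n0 + 2 * (k + 1))) : False := by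
  have hlb : ∀ k, a n0 ≤ a (n0 + 2 * k) := by
    intro k
    induction k with
    | zero => simp
    | succ k ih => exact ih.trans (hmono k)
  have h0 : Filter.Tendsto (fun n => (a (n + 1)) ^ 2) Filter.atTop (nhds 0) :=
    hsum.tendsto_atTop_zero
  have h1 : Filter.Tendsto (fun n => a (n + 1)) Filter.atTop (nhds 0) := by
    have hs : Filter.Tendsto (fun n => Real.sqrt ((a (n + 1)) ^ 2)) Filter.atTop
        (nhds (Real.sqrt 0)) := (Real.continuous_sqrt.tendsto 0).comp h0
    simpa [Real.sqrt_sq (hpos _).le] using hs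
  have ha : Filter.Tendsto a Filter.atTop (nhds 0) :=
    (Filter.tendsto_add_atTop_iff_nat 1).mp h1
  have hsm : StrictMono (fun k : ℕ => n0 + 2 * k) := by
    intro x y h; simp only; omega
  have hsub : Filter.Tendsto (fun k => a (n0 + 2 * k)) Filter.atTop (nhds 0) :=
    ha.comp hsm.tendsto_atTop
  have : a n0 ≤ 0 := ge_of_tendsto hsub (Filter.Eventually.of_forall hlb)
  exact absurd this (not_le.mpr (hpos n0))

/-- Let `α > 0`, `f > 0`. If `(a_n)_{n≥0}` is a sequence of strictly positive
reals with `a_0 = f`, `Σ_{n≥1} a_n² < ∞` and `c_{n−1} a_{n−1}² = c_n a_n a_{n+1}` for all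
`n ≥ 1` (where `c_n = 2^(αn)`), then `a_n = f·2^(−αn/3)` for every `n ≥ 0`: the forced
inviscid DN model has a unique positive constant solution of finite energy. -/
theorem constant_solution_unique (α f : ℝ) (hα : 0 < α) (hf : 0 < f)
    (a : ℕ → ℝ) (hpos : ∀ n, 0 < a n) (h0 : a 0 = f)
    (hsum : Summable fun n => (a (n + 1)) ^ 2)
    (hrec : ∀ n : ℕ, 1 ≤ n →
      (2 : ℝ) ^ (α * ((n : ℝ) - 1)) * (a (n - 1)) ^ 2
        = (2 : ℝ) ^ (α * (n : ℝ)) * a n * a (n + 1)) :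
    ∀ n : ℕ, a n = f * (2 : ℝ) ^ (-(α * (n : ℝ)) / 3) := by
  set L : ℕ → ℝ := fun n => Real.log (a n) - Real.log f + α * Real.log 2 * n / 3 with hL
  have hlog : ∀ n : ℕ, Real.log (a n) = Real.log f - α * Real.log 2 * n / 3 + L n := by
    intro n; simp only [hL]; ring
  -- take logs of the recurrence
  have hrec2 : ∀ n : ℕ, L (n + 2) = 2 * L n - L (n + 1) := by
    intro n
    have h := hrec (n + 1) (by omega)
    have h1 : (n + 1) - 1 = n := rfl
    rw [h1] at h
    have hll := congrArg Real.log h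
    rw [Real.log_mul (Real.rpow_pos_of_pos two_pos _).ne' (pow_ne_zero 2 (hpos n).ne'),
        Real.log_mul (mul_ne_zero (Real.rpow_pos_of_pos two_pos _).ne' (hpos (n + 1)).ne')
          (hpos (n + 2)).ne',
        Real.log_mul (Real.rpow_pos_of_pos two_pos _).ne' (hpos (n + 1)).ne',
        Real.log_rpow two_pos, Real.log_rpow two_pos, Real.log_pow] at hll
    simp only [hL]
    push_cast at hll ⊢
    linarith
  -- closed formula for L
  have key : ∀ n : ℕ, L n = L 1 / 3 * (1 - (-2 : ℝ) ^ n)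
      ∧ L (n + 1) = L 1 / 3 * (1 - (-2 : ℝ) ^ (n + 1)) := by
    intro n
    induction n with
    | zero =>
      have hL0 : L 0 = 0 := by simp [hL, h0]
      constructor
      · simpa using hL0
      · norm_num
    | succ n ih =>
      refine ⟨ih.2, ?_⟩
      have := hrec2 n
      rw [ih.1, ih.2] at this
      rw [this]; ring
  have hform : ∀ n : ℕ, L n = L 1 / 3 * (1 - (-2 : ℝ) ^ n) := fun n => (key n).1
  set t := L 1 with ht
  -- difference of logs two steps apart
  have hdiff : ∀ n : ℕ, Real.log (a (n + 2)) - Real.log (a n)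
      = -t * (-2 : ℝ) ^ n - 2 * (α * Real.log 2 / 3) := by
    intro n
    rw [hlog (n + 2), hlog n, hform (n + 2), hform n]
    push_cast
    ring
  have hlog2pos : 0 < Real.log 2 := Real.log_pos (by norm_num)
  rcases lt_trichotomy t 0 with htn | htz | htp
  · -- t < 0 : even subsequence grows, contradiction
    exfalso
    obtain ⟨m, hm⟩ := exists_nat_ge (2 * (α * Real.log 2 / 3) / (-t))
    refine no_mono_growth a hpos hsum (2 * m) ?_
    intro k
    set n := 2 * m + 2 * k with hn
    have heven : Even n := ⟨m + k, by omega⟩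
    have hneg : (-2 : ℝ) ^ n = 2 ^ n := Even.neg_pow heven 2
    have h2n : 2 * (α * Real.log 2 / 3) / (-t) ≤ (2 : ℝ) ^ n := by
      have hmn : (m : ℝ) ≤ (n : ℝ) := by exact_mod_cast (by omega : m ≤ n)
      have hnp : (n : ℝ) ≤ (2 : ℝ) ^ n := by
        have := Nat.lt_two_pow_self (n := n)
        exact_mod_cast this.le
      linarith
    have hstep : Real.log (a n) ≤ Real.log (a (n + 2)) := by
      have hd := hdiff n
      rw [hneg] at hd
      have htn' : 0 < -t := by linarith
      have : 2 * (α * Real.log 2 / 3) ≤ (-t) * 2 ^ n := by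
        have := mul_le_mul_of_nonneg_left h2n htn'.le
        rwa [mul_div_cancel₀ _ (ne_of_gt htn')] at this
      nlinarith
    have hle : a n ≤ a (n + 2) := (Real.log_le_log_iff (hpos n) (hpos (n + 2))).mp hstep
    have hidx : 2 * m + 2 * (k + 1) = n + 2 := by omega
    rw [hidx]
    exact hle
  · -- t = 0 : the solution is the fixed point
    intro n
    have hLn : L n = 0 := by rw [hform n, htz]; ring
    have hlogn : Real.log (a n) = Real.log f - α * Real.log 2 * n / 3 := by
      rw [hlog n, hLn]; ring
    have : a n = Real.exp (Real.log f - α * Real.log 2 * n / 3) := by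
      rw [← hlogn, Real.exp_log (hpos n)]
    rw [this, Real.rpow_def_of_pos (by norm_num : (0:ℝ) < 2),
        ← Real.exp_log hf, ← Real.exp_add]
    congr 1
    rw [Real.exp_log hf]
    ring
  · -- t > 0 : odd subsequence grows, contradiction
    exfalso
    obtain ⟨m, hm⟩ := exists_nat_ge (2 * (α * Real.log 2 / 3) / t)
    refine no_mono_growth a hpos hsum (2 * m + 1) ?_
    intro k
    set n := 2 * m + 1 + 2 * k with hn
    have hodd : Odd n := ⟨m + k, by omega⟩
    have hneg : (-2 : ℝ) ^ n = -(2 ^ n) := Odd.neg_pow hodd 2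
    have h2n : 2 * (α * Real.log 2 / 3) / t ≤ (2 : ℝ) ^ n := by
      have hmn : (m : ℝ) ≤ (n : ℝ) := by exact_mod_cast (by omega : m ≤ n)
      have hnp : (n : ℝ) ≤ (2 : ℝ) ^ n := by
        have := Nat.lt_two_pow_self (n := n)
        exact_mod_cast this.le
      linarith
    have hstep : Real.log (a n) ≤ Real.log (a (n + 2)) := by
      have hd := hdiff n
      rw [hneg] at hd
      have : 2 * (α * Real.log 2 / 3) ≤ t * 2 ^ n := by
        have := mul_le_mul_of_nonneg_left h2n htp.le
        rwa [mul_div_cancel₀ _ (ne_of_gt htp)] at this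
      nlinarith
    have hle : a n ≤ a (n + 2) := (Real.log_le_log_iff (hpos n) (hpos (n + 2))).mp hstep
    have hidx : 2 * m + 1 + 2 * (k + 1) = n + 2 := by omega
    rw [hidx]
    exact hle

end Stmt3
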